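/- Let γ ∈ (−3, 1] and let k > max{3, 3+γ} be real. Then for every η > 0 there exists ε₀ ∈ (0,1) such that for every ε ∈ (0, ε₀) and every v ∈ ℝ³, ∫_{E_ε(v)} |v−v*|^γ ⟨v*⟩^{−k} dv* ≤ η ⟨v⟩^γ, where E_ε(v) := {v* ∈ ℝ³ : |v−v*| > ⟨v⟩/ε or |v−v*| < ε⟨v⟩}. -/

import Mathlib

open MeasureTheory Real
open scoped ENNReal RealInnerProductSpace Classical

noncomputable section

/-- velocity space ℝ³ -/
abbrev E3 : Type := EuclideanSpace ℝ (Fin 3)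

/-- the unit sphere 𝕊² ⊆ ℝ³ -/
abbrev S2 : Type := Metric.sphere (0 : E3) 1

/-- surface measure on the unit sphere -/
noncomputable instance : MeasureSpace S2 := ⟨(volume : Measure E3).toSphere⟩

/-- Japanese bracket ⟨v⟩ = √(1+|v|²). -/
def jap (v : E3) : ℝ := Real.sqrt (1 + ‖v‖ ^ 2)

/-- Post-collision velocity v' = (v+v*)/2 + (|v-v*|/2)σ. -/
def vP (v w : E3) (σ : S2) : E3 := (2⁻¹ : ℝ) • (v + w) + (‖v - w‖ / 2) • (σ : E3)

/-- Post-collision velocity v*' = (v+v*)/2 - (|v-v*|/2)σ. -/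
def vsP (v w : E3) (σ : S2) : E3 := (2⁻¹ : ℝ) • (v + w) - (‖v - w‖ / 2) • (σ : E3)

/-- cos θ = ((v-v*)/|v-v*|)·σ. -/
def cosTheta (v w : E3) (σ : S2) : ℝ := ⟪v - w, (σ : E3)⟫ / ‖v - w‖

/-- sin(θ/2) = √((1-cos θ)/2). -/
def sinHalf (v w : E3) (σ : S2) : ℝ := Real.sqrt ((1 - cosTheta v w σ) / 2)

/-- cos(θ/2) = √((1+cos θ)/2). -/
def cosHalf (v w : E3) (σ : S2) : ℝ := Real.sqrt ((1 + cosTheta v w σ) / 2)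

/-- a fixed reference unit direction, used to express rotation-invariant angular integrals -/
def e1 : E3 := EuclideanSpace.single 0 1

/-- cos θ for the deviation angle of σ relative to the fixed direction `e1` -/
def cos1 (σ : S2) : ℝ := ⟪e1, (σ : E3)⟫

def sinHalf1 (σ : S2) : ℝ := Real.sqrt ((1 - cos1 σ) / 2)

def cosHalf1 (σ : S2) : ℝ := Real.sqrt ((1 + cos1 σ) / 2)

/-- the standard Maxwellian μ(v) = (2π)^{-3/2} e^{-|v|²/2} -/
def maxw (v : E3) : ℝ := (2 * π) ^ (-(3 : ℝ) / 2) * Real.exp (-‖v‖ ^ 2 / 2)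

/-- Grad's angular cutoff assumption (A2): `bf` is measurable, nonnegative,
`K ≤ bf ≤ K⁻¹` on `[0,1]` for some `K > 0`, and `bf` vanishes on negatives. -/
def gradCutoff (bf : ℝ → ℝ) : Prop :=
  Measurable bf ∧ (∀ t, 0 ≤ bf t) ∧
    (∃ K : ℝ, 0 < K ∧ ∀ t ∈ Set.Icc (0 : ℝ) 1, K ≤ bf t ∧ bf t ≤ K⁻¹) ∧
    ∀ t : ℝ, t < 0 → bf t = 0

/-- gain operator Q⁺ -/
def Qgain (γ : ℝ) (bf : ℝ → ℝ) (f g : E3 → ℝ) (v : E3) : ℝ :=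
  ∫ w : E3, ∫ σ : S2, ‖v - w‖ ^ γ * bf (cosTheta v w σ) * (f (vsP v w σ) * g (vP v w σ))

/-- loss operator Q⁻ -/
def Qloss (γ : ℝ) (bf : ℝ → ℝ) (f g : E3 → ℝ) (v : E3) : ℝ :=
  ∫ w : E3, ∫ σ : S2, ‖v - w‖ ^ γ * bf (cosTheta v w σ) * (f w * g v)

/-- the Boltzmann collision operator Q = Q⁺ - Q⁻ -/
def Qcol (γ : ℝ) (bf : ℝ → ℝ) (f g : E3 → ℝ) (v : E3) : ℝ :=
  ∫ w : E3, ∫ σ : S2, ‖v - w‖ ^ γ * bf (cosTheta v w σ) *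
    (f (vsP v w σ) * g (vP v w σ) - f w * g v)

/-- collision frequency ν(v) -/
def nuF (γ : ℝ) (bf : ℝ → ℝ) (v : E3) : ℝ :=
  ∫ w : E3, ∫ σ : S2, ‖v - w‖ ^ γ * bf (cosTheta v w σ) * maxw w

/-- squared weighted norm ‖f‖²_{L²_q} -/
def wSqR (q : ℝ) (f : E3 → ℝ) : ℝ := ∫ v : E3, f v ^ 2 * jap v ^ (2 * q)

/-- weighted norm ‖f‖_{L²_q} -/
def wNorm (q : ℝ) (f : E3 → ℝ) : ℝ := Real.sqrt (wSqR q f)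

/-- squared star norm ‖f‖²_{L²_{k+γ/2,*}} = ∫∫ μ(v*)|v-v*|^γ f(v)² ⟨v⟩^{2k} -/
def starSq (γ k : ℝ) (f : E3 → ℝ) : ℝ :=
  ∫ v : E3, ∫ w : E3, maxw w * ‖v - w‖ ^ γ * f v ^ 2 * jap v ^ (2 * k)

/-- star norm ‖f‖_{L²_{k+γ/2,*}} -/
def starNorm (γ k : ℝ) (f : E3 → ℝ) : ℝ := Real.sqrt (starSq γ k f)

/-- squared exponentially weighted norm ‖f‖²_{L²_{q,a,b}} -/
def expSq (q a b : ℝ) (f : E3 → ℝ) : ℝ :=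
  ∫ v : E3, f v ^ 2 * jap v ^ (2 * q) * Real.exp (2 * a * jap v ^ b)

/-- exponentially weighted norm ‖f‖_{L²_{q,a,b}} -/
def expNorm (q a b : ℝ) (f : E3 → ℝ) : ℝ := Real.sqrt (expSq q a b f)

lemma jap_pos (v : E3) : 0 < jap v := Real.sqrt_pos.2 (by positivity)

lemma one_le_jap (v : E3) : 1 ≤ jap v := by
  rw [show (1:ℝ) = Real.sqrt 1 by simp]
  exact Real.sqrt_le_sqrt (by nlinarith [sq_nonneg ‖v‖])

lemma norm_le_jap (v : E3) : ‖v‖ ≤ jap v := by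
  rw [show ‖v‖ = Real.sqrt (‖v‖^2) by simp [Real.sqrt_sq (norm_nonneg v)]]
  exact Real.sqrt_le_sqrt (by linarith)

lemma jap_le_one_add (v : E3) : jap v ≤ 1 + ‖v‖ := sqrt_one_add_norm_sq_le v

lemma continuous_jap : Continuous jap := by
  unfold jap
  fun_prop

lemma measurable_jap_rpow (c : ℝ) : Measurable fun w : E3 => ENNReal.ofReal (jap w ^ c) :=
  by unfold jap; fun_prop

lemma finrank_E3 : Module.finrank ℝ E3 = 3 := finrank_euclideanSpace_fin

lemma finite_jap_int {p : ℝ} (hp : 3 < p) :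
    (∫⁻ w : E3, ENNReal.ofReal (jap w ^ (-p))) < ∞ := by
  have h : ∀ w : E3, jap w ^ (-p) = ((1:ℝ) + ‖w‖ ^ 2) ^ (-p / 2) := by
    intro w
    rw [jap, Real.sqrt_eq_rpow, ← Real.rpow_mul (by positivity)]
    ring_nf
  simp_rw [h]
  apply Integrable.lintegral_lt_top
  apply integrable_rpow_neg_one_add_norm_sq
  rw [finrank_E3]; exact_mod_cast hp

lemma finite_ball_int {γ : ℝ} (hγ : -3 < γ) :
    (∫⁻ u in Metric.ball (0:E3) 1, ENNReal.ofReal (‖u‖ ^ γ)) < ∞ := by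
  rcases le_or_gt 0 γ with h0 | h0
  · calc (∫⁻ u in Metric.ball (0:E3) 1, ENNReal.ofReal (‖u‖ ^ γ))
        ≤ ∫⁻ _ in Metric.ball (0:E3) 1, 1 := by
          apply setLIntegral_mono' measurableSet_ball
          intro u hu
          rw [show (1:ℝ≥0∞) = ENNReal.ofReal 1 by simp]
          apply ENNReal.ofReal_le_ofReal
          exact Real.rpow_le_one (norm_nonneg u) (le_of_lt (by simpa using hu)) h0
      _ = volume (Metric.ball (0:E3) 1) := setLIntegral_one _
      _ < ∞ := measure_ball_lt_top
  · have hγ0 : γ ≠ 0 := ne_of_lt h0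
    rw [lintegral_eq_lintegral_meas_le _ (ae_of_all _ fun u => Real.rpow_nonneg (norm_nonneg u) γ)
      (by fun_prop)]
    set ν := volume.restrict (Metric.ball (0:E3) 1)
    calc (∫⁻ t in Set.Ioi (0:ℝ), ν {a | t ≤ ‖a‖ ^ γ})
        ≤ ∫⁻ t in Set.Ioc (0:ℝ) 1 ∪ Set.Ioi 1, ν {a | t ≤ ‖a‖ ^ γ} :=
          lintegral_mono_set Set.Ioi_subset_Ioc_union_Ioi
      _ ≤ (∫⁻ t in Set.Ioc (0:ℝ) 1, ν {a | t ≤ ‖a‖ ^ γ}) +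
            ∫⁻ t in Set.Ioi (1:ℝ), ν {a | t ≤ ‖a‖ ^ γ} := lintegral_union_le _ _ _
      _ < ∞ := by
          apply ENNReal.add_lt_top.2
          constructor
          · calc (∫⁻ t in Set.Ioc (0:ℝ) 1, ν {a | t ≤ ‖a‖ ^ γ})
                ≤ ∫⁻ _ in Set.Ioc (0:ℝ) 1, volume (Metric.ball (0:E3) 1) := by
                  apply lintegral_mono
                  intro t
                  calc ν {a | t ≤ ‖a‖ ^ γ} ≤ ν Set.univ := measure_mono (Set.subset_univ _)
                    _ = volume (Metric.ball (0:E3) 1) := by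
                        simp [ν, Measure.restrict_apply_univ]
              _ = volume (Metric.ball (0:E3) 1) * volume (Set.Ioc (0:ℝ) 1) :=
                  setLIntegral_const _ _
              _ < ∞ := by
                  apply ENNReal.mul_lt_top measure_ball_lt_top
                  simp [Real.volume_Ioc]
          · have hexp : γ⁻¹ * 3 < -1 := by
              rw [← div_eq_inv_mul, div_lt_iff_of_neg h0]
              linarith
            have key : ∀ t ∈ Set.Ioi (1:ℝ), ν {a | t ≤ ‖a‖ ^ γ} ≤
                ENNReal.ofReal (t ^ (γ⁻¹ * 3)) * volume (Metric.ball (0:E3) 1) := by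
              intro t ht
              have ht0 : (0:ℝ) < t := lt_trans one_pos ht
              have hsub : {a : E3 | t ≤ ‖a‖ ^ γ} ⊆ Metric.closedBall 0 (t ^ γ⁻¹) := by
                intro a ha
                simp only [Set.mem_setOf_eq] at ha
                have hna : 0 < ‖a‖ := by
                  rcases eq_or_lt_of_le (norm_nonneg a) with h | h
                  · exfalso
                    rw [← h, Real.zero_rpow hγ0] at ha
                    linarith
                  · exact h
                rw [Metric.mem_closedBall, dist_zero_right]
                exact (Real.le_rpow_inv_iff_of_neg hna ht0 h0).2 ha
              calc ν {a : E3 | t ≤ ‖a‖ ^ γ} ≤ ν (Metric.closedBall 0 (t ^ γ⁻¹)) :=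
                    measure_mono hsub
                _ ≤ volume (Metric.closedBall (0:E3) (t ^ γ⁻¹)) := by
                    rw [Measure.restrict_apply' measurableSet_ball]
                    exact measure_mono Set.inter_subset_left
                _ = ENNReal.ofReal ((t ^ γ⁻¹) ^ Module.finrank ℝ E3) *
                      volume (Metric.ball (0:E3) 1) :=
                    Measure.addHaar_closedBall _ _ (Real.rpow_nonneg ht0.le _)
                _ = ENNReal.ofReal (t ^ (γ⁻¹ * 3)) * volume (Metric.ball (0:E3) 1) := by
                    rw [finrank_E3, ← Real.rpow_natCast (t ^ γ⁻¹) 3,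
                      ← Real.rpow_mul ht0.le]
                    norm_num
            calc (∫⁻ t in Set.Ioi (1:ℝ), ν {a | t ≤ ‖a‖ ^ γ})
                ≤ ∫⁻ t in Set.Ioi (1:ℝ),
                    ENNReal.ofReal (t ^ (γ⁻¹ * 3)) * volume (Metric.ball (0:E3) 1) :=
                  setLIntegral_mono' measurableSet_Ioi key
              _ = (∫⁻ t in Set.Ioi (1:ℝ), ENNReal.ofReal (t ^ (γ⁻¹ * 3))) *
                    volume (Metric.ball (0:E3) 1) :=
                  lintegral_mul_const' _ _ measure_ball_lt_top.ne
              _ < ∞ := by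
                  apply ENNReal.mul_lt_top _ measure_ball_lt_top
                  exact (integrableOn_Ioi_rpow_of_lt hexp one_pos).setLIntegral_lt_top

lemma ball_translate (v : E3) (R : ℝ) (γ : ℝ) :
    (∫⁻ w in Metric.ball v R, ENNReal.ofReal (‖v - w‖ ^ γ)) =
      ∫⁻ u in Metric.ball (0:E3) R, ENNReal.ofReal (‖u‖ ^ γ) := by
  have hmp : MeasurePreserving (fun u : E3 => v - u) volume volume :=
    MeasureTheory.Measure.measurePreserving_sub_left volume v
  have hemb : MeasurableEmbedding (fun u : E3 => v - u) :=
    (MeasurableEquiv.subLeft v).measurableEmbedding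
  have hpre : (fun u : E3 => v - u) ⁻¹' Metric.ball (0:E3) R = Metric.ball v R := by
    ext u
    simp [Metric.mem_ball, dist_eq_norm, norm_sub_rev v u]
  calc (∫⁻ w in Metric.ball v R, ENNReal.ofReal (‖v - w‖ ^ γ))
      = ∫⁻ u in (fun u : E3 => v - u) ⁻¹' Metric.ball (0:E3) R,
          ENNReal.ofReal (‖v - u‖ ^ γ) := by rw [hpre]
    _ = ∫⁻ u in Metric.ball (0:E3) R, ENNReal.ofReal (‖u‖ ^ γ) :=
        hmp.setLIntegral_comp_preimage_emb hemb (fun u => ENNReal.ofReal (‖u‖ ^ γ)) (Metric.ball 0 R)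

lemma ball_scale {R γ : ℝ} (hR : 0 < R) :
    (∫⁻ u in Metric.ball (0:E3) R, ENNReal.ofReal (‖u‖ ^ γ)) =
      ENNReal.ofReal (R ^ (3 + γ)) *
        ∫⁻ u in Metric.ball (0:E3) 1, ENNReal.ofReal (‖u‖ ^ γ) := by
  have hmeas : Measurable fun u : E3 => ENNReal.ofReal (‖u‖ ^ γ) := by fun_prop
  have hmap : Measure.map (fun u : E3 => R • u) volume =
      ENNReal.ofReal |(R ^ Module.finrank ℝ E3)⁻¹| • volume :=
    Measure.map_addHaar_smul volume hR.ne'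
  have hpre : (fun u : E3 => R • u) ⁻¹' Metric.ball (0:E3) R = Metric.ball 0 1 := by
    ext u
    simp only [Set.mem_preimage, Metric.mem_ball, dist_zero_right, norm_smul,
      Real.norm_eq_abs, abs_of_pos hR]
    constructor
    · intro h
      have := (mul_lt_iff_lt_one_right hR).1 h
      exact this
    · intro h
      calc R * ‖u‖ < R * 1 := by exact mul_lt_mul_of_pos_left h hR
        _ = R := mul_one R
  have h1 : (∫⁻ w in Metric.ball (0:E3) R, ENNReal.ofReal (‖w‖ ^ γ)
        ∂(Measure.map (fun u : E3 => R • u) volume)) =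
      ∫⁻ u in Metric.ball (0:E3) 1, ENNReal.ofReal (‖R • u‖ ^ γ) := by
    rw [setLIntegral_map measurableSet_ball hmeas (by fun_prop), hpre]
  rw [hmap] at h1
  have h2 : (∫⁻ w in Metric.ball (0:E3) R, ENNReal.ofReal (‖w‖ ^ γ)
        ∂(ENNReal.ofReal |(R ^ Module.finrank ℝ E3)⁻¹| • volume)) =
      ENNReal.ofReal |(R ^ Module.finrank ℝ E3)⁻¹| *
        ∫⁻ w in Metric.ball (0:E3) R, ENNReal.ofReal (‖w‖ ^ γ) := by
    rw [Measure.restrict_smul, lintegral_smul_measure, smul_eq_mul]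
  have h3 : (∫⁻ u in Metric.ball (0:E3) 1, ENNReal.ofReal (‖R • u‖ ^ γ)) =
      ENNReal.ofReal (R ^ γ) * ∫⁻ u in Metric.ball (0:E3) 1, ENNReal.ofReal (‖u‖ ^ γ) := by
    rw [← lintegral_const_mul _ hmeas]
    congr 1
    ext u
    rw [norm_smul, Real.norm_eq_abs, abs_of_pos hR, Real.mul_rpow hR.le (norm_nonneg u),
      ENNReal.ofReal_mul (Real.rpow_nonneg hR.le γ)]
  have key : ENNReal.ofReal |(R ^ Module.finrank ℝ E3)⁻¹| *
      (∫⁻ w in Metric.ball (0:E3) R, ENNReal.ofReal (‖w‖ ^ γ)) =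
      ENNReal.ofReal (R ^ γ) * ∫⁻ u in Metric.ball (0:E3) 1, ENNReal.ofReal (‖u‖ ^ γ) := by
    rw [← h2, h1, h3]
  have hcancel : ENNReal.ofReal (R ^ (3:ℕ)) * ENNReal.ofReal |(R ^ Module.finrank ℝ E3)⁻¹| = 1 := by
    rw [finrank_E3, ← ENNReal.ofReal_mul (by positivity)]
    rw [abs_of_pos (by positivity), mul_inv_cancel₀ (by positivity)]
    simp
  calc (∫⁻ u in Metric.ball (0:E3) R, ENNReal.ofReal (‖u‖ ^ γ))
      = (ENNReal.ofReal (R ^ (3:ℕ)) * ENNReal.ofReal |(R ^ Module.finrank ℝ E3)⁻¹|) *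
          ∫⁻ u in Metric.ball (0:E3) R, ENNReal.ofReal (‖u‖ ^ γ) := by rw [hcancel, one_mul]
    _ = ENNReal.ofReal (R ^ (3:ℕ)) * (ENNReal.ofReal (R ^ γ) *
          ∫⁻ u in Metric.ball (0:E3) 1, ENNReal.ofReal (‖u‖ ^ γ)) := by
        rw [mul_assoc, key]
    _ = ENNReal.ofReal (R ^ (3 + γ)) *
          ∫⁻ u in Metric.ball (0:E3) 1, ENNReal.ofReal (‖u‖ ^ γ) := by
        rw [← mul_assoc, ← ENNReal.ofReal_mul (by positivity), ← Real.rpow_natCast R 3,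
          ← Real.rpow_add hR]
        norm_num

lemma near_bound {k ε : ℝ} (hk0 : 0 < k) (hε : 0 < ε) (hε2 : ε ≤ 1/2) (v w : E3)
    (hw : ‖v - w‖ < ε * jap v) :
    jap w ^ (-k) ≤ 4 ^ k * jap v ^ (-k) := by
  have hv0 := jap_pos v
  have hw1 := one_le_jap w
  have h4 : jap v / 4 ≤ jap w := by
    have h1 : jap v ≤ 1 + ‖v‖ := jap_le_one_add v
    have h2 : ‖v‖ ≤ ‖w‖ + ‖v - w‖ := by
      calc ‖v‖ = ‖w + (v - w)‖ := by rw [add_sub_cancel]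
        _ ≤ ‖w‖ + ‖v - w‖ := norm_add_le _ _
    have h3 : ‖w‖ ≤ jap w := norm_le_jap w
    nlinarith
  have hstep : jap w ^ (-k) ≤ (jap v / 4) ^ (-k) :=
    Real.rpow_le_rpow_of_nonpos (by positivity) h4 (by linarith)
  calc jap w ^ (-k) ≤ (jap v / 4) ^ (-k) := hstep
    _ = jap v ^ (-k) / 4 ^ (-k) := Real.div_rpow hv0.le (by norm_num) _
    _ = 4 ^ k * jap v ^ (-k) := by
        rw [Real.rpow_neg (by norm_num : (0:ℝ) ≤ 4)]
        field_simp


lemma far_bound {γ k ε γp δ : ℝ} (hγp : γp = max γ 0) (hδpos : 0 < δ)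
    (hε : 0 < ε) (hε2 : ε ≤ 1/2) (v w : E3) (hw : jap v / ε < ‖v - w‖) :
    ‖v - w‖ ^ γ * jap w ^ (-k) ≤
      (2 ^ (γp + δ) * ε ^ (γp - γ + δ) * jap v ^ γ) * jap w ^ (-(k - γp - δ)) := by
  set r := ‖v - w‖ with hr
  have hv0 := jap_pos v
  have hw0 := jap_pos w
  have hv1 := one_le_jap v
  have hw1 := one_le_jap w
  have hr0 : 0 < r := lt_of_le_of_lt (by positivity) hw
  have hjv_lt : jap v < r * ε := (div_lt_iff₀ hε).1 hw
  have hwnorm : r / 2 ≤ ‖w‖ := by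
    have h1 : r ≤ ‖v‖ + ‖w‖ := norm_sub_le v w
    have h2 : ‖v‖ ≤ jap v := norm_le_jap v
    nlinarith
  have hjw : 1 / (2 * ε) ≤ jap w := by
    have h3 : 1 / ε ≤ r := by
      have : 1 / ε ≤ jap v / ε := by gcongr
      linarith [hw]
    have h4 : ‖w‖ ≤ jap w := norm_le_jap w
    calc 1 / (2 * ε) = (1 / ε) / 2 := by ring
      _ ≤ r / 2 := by linarith
      _ ≤ ‖w‖ := hwnorm
      _ ≤ jap w := h4
  have step1 : r ^ γ ≤ 2 ^ γp * ε ^ (γp - γ) * (jap v ^ γ * jap w ^ γp) := by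
    rcases le_or_gt 0 γ with h0 | h0
    · have hγpγ : γp = γ := hγp.trans (max_eq_left h0)
      rw [hγpγ]
      have hle : r ≤ 2 * jap v * jap w := by
        have h1 : r ≤ ‖v‖ + ‖w‖ := norm_sub_le v w
        have h2 : ‖v‖ ≤ jap v := norm_le_jap v
        have h4 : ‖w‖ ≤ jap w := norm_le_jap w
        nlinarith
      calc r ^ γ ≤ (2 * jap v * jap w) ^ γ :=
            Real.rpow_le_rpow (norm_nonneg _) hle h0
        _ = 2 ^ γ * jap v ^ γ * jap w ^ γ := by
            rw [Real.mul_rpow (by positivity) hw0.le, Real.mul_rpow (by norm_num) hv0.le]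
        _ = 2 ^ γ * ε ^ (γ - γ) * (jap v ^ γ * jap w ^ γ) := by
            simp [Real.rpow_zero]
            ring
    · have hγp0 : γp = 0 := hγp.trans (max_eq_right h0.le)
      rw [hγp0]
      have h1 : r ^ γ ≤ (jap v / ε) ^ γ :=
        Real.rpow_le_rpow_of_nonpos (by positivity) hw.le h0.le
      calc r ^ γ ≤ (jap v / ε) ^ γ := h1
        _ = jap v ^ γ / ε ^ γ := Real.div_rpow hv0.le hε.le _
        _ = 2 ^ (0:ℝ) * ε ^ (0 - γ) * (jap v ^ γ * jap w ^ (0:ℝ)) := by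
            rw [Real.rpow_zero, Real.rpow_zero, zero_sub, Real.rpow_neg hε.le]
            ring
  have step2 : jap w ^ (γp - k) ≤ (2 * ε) ^ δ * jap w ^ (-(k - γp - δ)) := by
    have h2ε : (0:ℝ) < 2 * ε := by linarith
    have hmono : jap w ^ (-δ) ≤ (1 / (2 * ε)) ^ (-δ) :=
      Real.rpow_le_rpow_of_nonpos (by positivity) hjw (by linarith)
    have heq : (1 / (2 * ε)) ^ (-δ) = (2 * ε) ^ δ := by
      rw [one_div, Real.inv_rpow h2ε.le, ← Real.rpow_neg h2ε.le, neg_neg]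
    calc jap w ^ (γp - k) = jap w ^ (-δ) * jap w ^ (-(k - γp - δ)) := by
          rw [← Real.rpow_add hw0]
          ring_nf
      _ ≤ (1 / (2 * ε)) ^ (-δ) * jap w ^ (-(k - γp - δ)) :=
          mul_le_mul_of_nonneg_right hmono (Real.rpow_nonneg hw0.le _)
      _ = (2 * ε) ^ δ * jap w ^ (-(k - γp - δ)) := by rw [heq]
  have hγp_nonneg : 0 ≤ γp := hγp ▸ le_max_right γ 0
  calc r ^ γ * jap w ^ (-k)
      ≤ (2 ^ γp * ε ^ (γp - γ) * (jap v ^ γ * jap w ^ γp)) * jap w ^ (-k) :=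
        mul_le_mul_of_nonneg_right step1 (Real.rpow_nonneg hw0.le _)
    _ = (2 ^ γp * ε ^ (γp - γ) * jap v ^ γ) * jap w ^ (γp - k) := by
        rw [show γp - k = γp + -k by ring, Real.rpow_add hw0]
        ring
    _ ≤ (2 ^ γp * ε ^ (γp - γ) * jap v ^ γ) * ((2 * ε) ^ δ * jap w ^ (-(k - γp - δ))) :=
        mul_le_mul_of_nonneg_left step2 (by positivity)
    _ = (2 ^ (γp + δ) * ε ^ (γp - γ + δ) * jap v ^ γ) * jap w ^ (-(k - γp - δ)) := by
        rw [Real.mul_rpow (by norm_num) hε.le, Real.rpow_add (by norm_num : (0:ℝ) < 2),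
          Real.rpow_add hε]
        ring

set_option maxHeartbeats 2000000 in
theorem stmt14_aux (γ k : ℝ) (hγ1 : -3 < γ) (hγ2 : γ ≤ 1) (hk : max 3 (3 + γ) < k) :
    ∀ η : ℝ, 0 < η → ∃ ε₀ : ℝ, 0 < ε₀ ∧ ε₀ < 1 ∧
      ∀ ε : ℝ, 0 < ε → ε < ε₀ → ∀ v : E3,
        (∫⁻ w in {w : E3 | jap v / ε < ‖v - w‖ ∨ ‖v - w‖ < ε * jap v},
            ENNReal.ofReal (‖v - w‖ ^ γ * jap w ^ (-k))) ≤
          ENNReal.ofReal (η * jap v ^ γ) := by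
  intro η hη
  have hk3 : (3:ℝ) < k := (le_max_left 3 (3+γ)).trans_lt hk
  have hkγ : 3 + γ < k := (le_max_right 3 (3+γ)).trans_lt hk
  have hk0 : 0 < k := by linarith
  set γp : ℝ := max γ 0 with hγp
  have hγp0 : 0 ≤ γp := le_max_right γ 0
  have hγpγ : γ ≤ γp := le_max_left γ 0
  have hγpk : 3 + γp < k := by
    rcases max_choice γ 0 with h | h <;> rw [hγp, h] <;> linarith
  set δ : ℝ := (k - 3 - γp) / 2 with hδdef
  have hδ : 0 < δ := by rw [hδdef]; linarith
  set p : ℝ := k - γp - δ with hpdef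
  have hp : 3 < p := by rw [hpdef, hδdef]; linarith
  set β : ℝ := γp - γ + δ with hβdef
  have hβ : 0 < β := by rw [hβdef]; linarith
  have h3γ : (0:ℝ) < 3 + γ := by linarith
  have hCp : (∫⁻ w : E3, ENNReal.ofReal (jap w ^ (-p))) < ∞ := finite_jap_int hp
  have hJ : (∫⁻ u in Metric.ball (0:E3) 1, ENNReal.ofReal (‖u‖ ^ γ)) < ∞ := finite_ball_int hγ1
  set Cp : ℝ := (∫⁻ w : E3, ENNReal.ofReal (jap w ^ (-p))).toReal with hCpdef
  set J : ℝ := (∫⁻ u in Metric.ball (0:E3) 1, ENNReal.ofReal (‖u‖ ^ γ)).toReal with hJdef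
  have hCp0 : 0 ≤ Cp := ENNReal.toReal_nonneg
  have hJ0 : 0 ≤ J := ENNReal.toReal_nonneg
  set A : ℝ := 2 ^ (γp + δ) with hA
  have hA0 : 0 < A := Real.rpow_pos_of_pos two_pos _
  set C1 : ℝ := A * Cp with hC1
  set C2 : ℝ := 4 ^ k * J with hC2
  have hC10 : 0 ≤ C1 := mul_nonneg hA0.le hCp0
  have h4k0 : (0:ℝ) < 4 ^ k := Real.rpow_pos_of_pos (by norm_num) _
  have hC20 : 0 ≤ C2 := mul_nonneg h4k0.le hJ0
  set ε₁ : ℝ := (η / (2 * C1 + 1)) ^ β⁻¹ with hε₁def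
  set ε₂ : ℝ := (η / (2 * C2 + 1)) ^ (3 + γ)⁻¹ with hε₂def
  have hε₁pos : 0 < ε₁ := Real.rpow_pos_of_pos (by positivity) _
  have hε₂pos : 0 < ε₂ := Real.rpow_pos_of_pos (by positivity) _
  refine ⟨min (1/2) (min ε₁ ε₂), by positivity,
    lt_of_le_of_lt (min_le_left _ _) (by norm_num), ?_⟩
  intro ε hε0 hεlt v
  have hεhalf : ε ≤ 1/2 := le_of_lt (hεlt.trans_le (min_le_left _ _))
  have hεε₁ : ε ≤ ε₁ := le_of_lt (hεlt.trans_le ((min_le_right _ _).trans (min_le_left _ _)))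
  have hεε₂ : ε ≤ ε₂ := le_of_lt (hεlt.trans_le ((min_le_right _ _).trans (min_le_right _ _)))
  have hv1 : 1 ≤ jap v := one_le_jap v
  have hv0 : 0 < jap v := jap_pos v
  have hepsβ : ε ^ β ≤ η / (2 * C1 + 1) := by
    calc ε ^ β ≤ ε₁ ^ β := Real.rpow_le_rpow hε0.le hεε₁ hβ.le
      _ = η / (2 * C1 + 1) := by
          rw [hε₁def, ← Real.rpow_mul (by positivity), inv_mul_cancel₀ hβ.ne', Real.rpow_one]
  have heps3γ : ε ^ (3 + γ) ≤ η / (2 * C2 + 1) := by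
    calc ε ^ (3 + γ) ≤ ε₂ ^ (3 + γ) := Real.rpow_le_rpow hε0.le hεε₂ h3γ.le
      _ = η / (2 * C2 + 1) := by
          rw [hε₂def, ← Real.rpow_mul (by positivity), inv_mul_cancel₀ h3γ.ne', Real.rpow_one]
  -- far part
  have hmeasp : Measurable fun w : E3 => ENNReal.ofReal (jap w ^ (-p)) :=
    measurable_jap_rpow (-p)
  have hFmeas : MeasurableSet {w : E3 | jap v / ε < ‖v - w‖} :=
    measurableSet_lt measurable_const (by fun_prop)
  have farInt : (∫⁻ w in {w : E3 | jap v / ε < ‖v - w‖},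
      ENNReal.ofReal (‖v - w‖ ^ γ * jap w ^ (-k))) ≤ ENNReal.ofReal (η/2 * jap v ^ γ) := by
    have hb : ∀ w ∈ {w : E3 | jap v / ε < ‖v - w‖},
        ENNReal.ofReal (‖v - w‖ ^ γ * jap w ^ (-k)) ≤
          ENNReal.ofReal (A * ε ^ β * jap v ^ γ) * ENNReal.ofReal (jap w ^ (-p)) := by
      intro w hw
      rw [← ENNReal.ofReal_mul (by positivity)]
      apply ENNReal.ofReal_le_ofReal
      have := far_bound (γ := γ) (k := k) hγp hδ hε0 hεhalf v w hw
      calc ‖v - w‖ ^ γ * jap w ^ (-k)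
          ≤ (2 ^ (γp + δ) * ε ^ (γp - γ + δ) * jap v ^ γ) * jap w ^ (-(k - γp - δ)) := this
        _ = A * ε ^ β * jap v ^ γ * jap w ^ (-p) := by rw [hA, hβdef, hpdef]
    have hreal : A * ε ^ β * jap v ^ γ * Cp ≤ η/2 * jap v ^ γ := by
      have h1 : C1 * ε ^ β ≤ η / 2 := by
        calc C1 * ε ^ β ≤ C1 * (η / (2 * C1 + 1)) := by
              apply mul_le_mul_of_nonneg_left hepsβ hC10
          _ ≤ η / 2 := by
              rw [mul_div_assoc', div_le_div_iff₀ (by positivity) (by norm_num)]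
              nlinarith
      calc A * ε ^ β * jap v ^ γ * Cp = (C1 * ε ^ β) * jap v ^ γ := by rw [hC1]; ring
        _ ≤ (η / 2) * jap v ^ γ :=
            mul_le_mul_of_nonneg_right h1 (Real.rpow_nonneg hv0.le _)
    calc (∫⁻ w in {w : E3 | jap v / ε < ‖v - w‖},
        ENNReal.ofReal (‖v - w‖ ^ γ * jap w ^ (-k)))
        ≤ ∫⁻ w in {w : E3 | jap v / ε < ‖v - w‖},
            ENNReal.ofReal (A * ε ^ β * jap v ^ γ) * ENNReal.ofReal (jap w ^ (-p)) :=
          setLIntegral_mono' hFmeas hb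
      _ ≤ ∫⁻ w : E3, ENNReal.ofReal (A * ε ^ β * jap v ^ γ) *
            ENNReal.ofReal (jap w ^ (-p)) := setLIntegral_le_lintegral _ _
      _ = ENNReal.ofReal (A * ε ^ β * jap v ^ γ) *
            ∫⁻ w : E3, ENNReal.ofReal (jap w ^ (-p)) := lintegral_const_mul _ hmeasp
      _ = ENNReal.ofReal (A * ε ^ β * jap v ^ γ) * ENNReal.ofReal Cp := by
          rw [hCpdef, ENNReal.ofReal_toReal hCp.ne]
      _ = ENNReal.ofReal (A * ε ^ β * jap v ^ γ * Cp) := by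
          rw [← ENNReal.ofReal_mul (by positivity)]
      _ ≤ ENNReal.ofReal (η/2 * jap v ^ γ) := ENNReal.ofReal_le_ofReal hreal
  -- near part
  have hNmeas : MeasurableSet {w : E3 | ‖v - w‖ < ε * jap v} :=
    measurableSet_lt (by fun_prop) measurable_const
  have hR : 0 < ε * jap v := by positivity
  have hmeas2 : Measurable fun w : E3 => ENNReal.ofReal (‖v - w‖ ^ γ) := by fun_prop
  have nearInt : (∫⁻ w in {w : E3 | ‖v - w‖ < ε * jap v},
      ENNReal.ofReal (‖v - w‖ ^ γ * jap w ^ (-k))) ≤ ENNReal.ofReal (η/2 * jap v ^ γ) := by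
    have hb : ∀ w ∈ {w : E3 | ‖v - w‖ < ε * jap v},
        ENNReal.ofReal (‖v - w‖ ^ γ * jap w ^ (-k)) ≤
          ENNReal.ofReal (4 ^ k * jap v ^ (-k)) * ENNReal.ofReal (‖v - w‖ ^ γ) := by
      intro w hw
      rw [← ENNReal.ofReal_mul (by positivity)]
      apply ENNReal.ofReal_le_ofReal
      have := near_bound hk0 hε0 hεhalf v w hw
      calc ‖v - w‖ ^ γ * jap w ^ (-k)
          ≤ ‖v - w‖ ^ γ * (4 ^ k * jap v ^ (-k)) :=
            mul_le_mul_of_nonneg_left this (Real.rpow_nonneg (norm_nonneg _) _)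
        _ = 4 ^ k * jap v ^ (-k) * ‖v - w‖ ^ γ := by ring
    have hsubset : {w : E3 | ‖v - w‖ < ε * jap v} ⊆ Metric.ball v (ε * jap v) := by
      intro w hw
      simp only [Set.mem_setOf_eq] at hw
      rw [Metric.mem_ball, dist_eq_norm, norm_sub_rev]
      exact hw
    have hreal2 : 4 ^ k * jap v ^ (-k) * ((ε * jap v) ^ (3 + γ) * J) ≤ η/2 * jap v ^ γ := by
      have e0 : (ε * jap v) ^ (3 + γ) = ε ^ (3 + γ) * jap v ^ (3 + γ) :=
        Real.mul_rpow hε0.le hv0.le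
      have e1 : jap v ^ (-k) * jap v ^ (3 + γ) = jap v ^ (3 + γ - k) := by
        rw [← Real.rpow_add hv0]; ring_nf
      have e2 : jap v ^ (3 + γ - k) ≤ jap v ^ γ :=
        Real.rpow_le_rpow_of_exponent_le hv1 (by linarith)
      have e3 : C2 * ε ^ (3 + γ) ≤ η / 2 := by
        calc C2 * ε ^ (3 + γ) ≤ C2 * (η / (2 * C2 + 1)) :=
              mul_le_mul_of_nonneg_left heps3γ hC20
          _ ≤ η / 2 := by
              rw [mul_div_assoc', div_le_div_iff₀ (by positivity) (by norm_num)]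
              nlinarith
      calc 4 ^ k * jap v ^ (-k) * ((ε * jap v) ^ (3 + γ) * J)
          = (C2 * ε ^ (3 + γ)) * (jap v ^ (-k) * jap v ^ (3 + γ)) := by
            rw [e0, hC2]; ring
        _ = (C2 * ε ^ (3 + γ)) * jap v ^ (3 + γ - k) := by rw [e1]
        _ ≤ (η / 2) * jap v ^ γ := by
            apply mul_le_mul e3 e2 (Real.rpow_nonneg hv0.le _) (by positivity)
    calc (∫⁻ w in {w : E3 | ‖v - w‖ < ε * jap v},
        ENNReal.ofReal (‖v - w‖ ^ γ * jap w ^ (-k)))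
        ≤ ∫⁻ w in {w : E3 | ‖v - w‖ < ε * jap v},
            ENNReal.ofReal (4 ^ k * jap v ^ (-k)) * ENNReal.ofReal (‖v - w‖ ^ γ) :=
          setLIntegral_mono' hNmeas hb
      _ ≤ ∫⁻ w in Metric.ball v (ε * jap v),
            ENNReal.ofReal (4 ^ k * jap v ^ (-k)) * ENNReal.ofReal (‖v - w‖ ^ γ) :=
          lintegral_mono_set hsubset
      _ = ENNReal.ofReal (4 ^ k * jap v ^ (-k)) *
            ∫⁻ w in Metric.ball v (ε * jap v), ENNReal.ofReal (‖v - w‖ ^ γ) :=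
          lintegral_const_mul _ hmeas2
      _ = ENNReal.ofReal (4 ^ k * jap v ^ (-k)) *
            (ENNReal.ofReal ((ε * jap v) ^ (3 + γ)) *
              ∫⁻ u in Metric.ball (0:E3) 1, ENNReal.ofReal (‖u‖ ^ γ)) := by
          rw [ball_translate, ball_scale hR]
      _ = ENNReal.ofReal (4 ^ k * jap v ^ (-k)) *
            (ENNReal.ofReal ((ε * jap v) ^ (3 + γ)) * ENNReal.ofReal J) := by
          rw [hJdef, ENNReal.ofReal_toReal hJ.ne]
      _ = ENNReal.ofReal (4 ^ k * jap v ^ (-k) * ((ε * jap v) ^ (3 + γ) * J)) := by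
          rw [← ENNReal.ofReal_mul (by positivity), ← ENNReal.ofReal_mul (by positivity)]
      _ ≤ ENNReal.ofReal (η/2 * jap v ^ γ) := ENNReal.ofReal_le_ofReal hreal2
  rw [Set.setOf_or]
  refine le_trans (lintegral_union_le _ _ _) ?_
  rw [show η * jap v ^ γ = η/2 * jap v ^ γ + η/2 * jap v ^ γ by ring,
    ENNReal.ofReal_add (by positivity) (by positivity)]
  exact add_le_add farInt nearInt

/-- smallness of the kernel integral over far/near annular regions. -/
theorem stmt14 (γ k : ℝ) (hγ1 : -3 < γ) (hγ2 : γ ≤ 1) (hk : max 3 (3 + γ) < k) :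
    ∀ η : ℝ, 0 < η → ∃ ε₀ : ℝ, 0 < ε₀ ∧ ε₀ < 1 ∧
      ∀ ε : ℝ, 0 < ε → ε < ε₀ → ∀ v : E3,
        (∫⁻ w in {w : E3 | jap v / ε < ‖v - w‖ ∨ ‖v - w‖ < ε * jap v},
            ENNReal.ofReal (‖v - w‖ ^ γ * jap w ^ (-k))) ≤
          ENNReal.ofReal (η * jap v ^ γ) :=
  stmt14_aux γ k hγ1 hγ2 hk

end
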